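/- Let F : P_c(ℝⁿ) → ℝ be of class C¹ with flat derivative δF/δμ that is C¹ in the second variable, and suppose the intrinsic derivative D_μF = D_y(δF/δμ) is bounded by a constant C_Ω on P(Ω) × Ω for a compact convex set Ω ⊂ ℝⁿ. Then F restricted to P(Ω) is Lipschitz with respect to the 2-Wasserstein distance: |F(μ′) − F(μ)| ≤ C_Ω · W₂(μ, μ′) for all μ, μ′ ∈ P(Ω). -/

import Mathlib

open MeasureTheory

/-- Squared 2-Wasserstein distance: infimum of transport costs over couplings. -/
noncomputable def W2sq {n : ℕ} (μ ν : Measure (EuclideanSpace ℝ (Fin n))) : ℝ :=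
  sInf { c : ℝ | ∃ π : Measure (EuclideanSpace ℝ (Fin n) × EuclideanSpace ℝ (Fin n)),
    IsProbabilityMeasure π ∧ π.map Prod.fst = μ ∧ π.map Prod.snd = ν ∧
    c = ∫ p, ‖p.1 - p.2‖ ^ 2 ∂π }

/-- 2-Wasserstein distance. -/
noncomputable def W2 {n : ℕ} (μ ν : Measure (EuclideanSpace ℝ (Fin n))) : ℝ :=
  Real.sqrt (W2sq μ ν)

/-- Cauchy–Schwarz: on a probability measure, the integral of a nonnegative function
is at most the square root of the integral of its square. -/
lemma integral_le_sqrt_integral_sq {α : Type*} [MeasurableSpace α]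
    {π : Measure α} [IsProbabilityMeasure π] {f : α → ℝ}
    (hm : AEStronglyMeasurable f π) (hnn : ∀ x, 0 ≤ f x) {M : ℝ}
    (hbd : ∀ᵐ x ∂π, ‖f x‖ ≤ M) :
    ∫ x, f x ∂π ≤ Real.sqrt (∫ x, f x ^ 2 ∂π) := by
  have hpq : (2 : ℝ).HolderConjugate 2 := Real.HolderConjugate.two_two
  have hf2 : MemLp f (ENNReal.ofReal 2) π := MemLp.of_bound hm M hbd
  have hg2 : MemLp (fun _ : α => (1 : ℝ)) (ENNReal.ofReal 2) π := memLp_const 1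
  have h := MeasureTheory.integral_mul_le_Lp_mul_Lq_of_nonneg hpq
    (Filter.Eventually.of_forall hnn)
    (Filter.Eventually.of_forall fun _ => zero_le_one) hf2 hg2
  simp only [mul_one, one_pow] at h
  have h1 : ∫ _ : α, (1 : ℝ) ^ (2 : ℝ) ∂π = 1 := by
    simp [Real.one_rpow]
  rw [h1, Real.one_rpow, mul_one] at h
  have h2 : ∫ x, f x ^ (2 : ℝ) ∂π = ∫ x, f x ^ 2 ∂π := by
    refine integral_congr_ae (Filter.Eventually.of_forall fun x => ?_)
    exact Real.rpow_two (f x)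
  rw [h2] at h
  rw [Real.sqrt_eq_rpow]
  exact h.trans_eq (by norm_num)

/-- Key estimate: if `g` is differentiable with `‖fderiv g‖ ≤ C` on a convex set `Ω`,
and `π` is a coupling of `μ, μ'` supported in `Ω × Ω`, then the difference of integrals of
`g` is bounded by `C` times the square root of the quadratic transport cost of `π`. -/
lemma key_estimate {n : ℕ} {Ω : Set (EuclideanSpace ℝ (Fin n))}
    (hΩc : IsCompact Ω) (hΩconv : Convex ℝ Ω)
    (g : EuclideanSpace ℝ (Fin n) → ℝ) {CΩ : ℝ} (hCΩ : 0 ≤ CΩ)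
    (hg : Differentiable ℝ g) (hbd : ∀ y ∈ Ω, ‖fderiv ℝ g y‖ ≤ CΩ)
    {μ μ' : Measure (EuclideanSpace ℝ (Fin n))}
    (π : Measure (EuclideanSpace ℝ (Fin n) × EuclideanSpace ℝ (Fin n)))
    (hπ : IsProbabilityMeasure π)
    (h1 : π.map Prod.fst = μ) (h2 : π.map Prod.snd = μ')
    (hμ : μ Ωᶜ = 0) (hμ' : μ' Ωᶜ = 0) :
    |(∫ y, g y ∂μ') - ∫ y, g y ∂μ| ≤ CΩ * Real.sqrt (∫ p, ‖p.1 - p.2‖ ^ 2 ∂π) := by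
  have msΩc : MeasurableSet Ωᶜ := hΩc.isClosed.measurableSet.compl
  have hgc : Continuous g := hg.continuous
  -- a.e. membership in Ω × Ω
  have hae : ∀ᵐ p ∂π, p.1 ∈ Ω ∧ p.2 ∈ Ω := by
    have e1 : π {p | p.1 ∈ Ωᶜ} = 0 := by
      have : π (Prod.fst ⁻¹' Ωᶜ) = (π.map Prod.fst) Ωᶜ :=
        (Measure.map_apply measurable_fst msΩc).symm
      simpa [Set.preimage] using this.trans (by rw [h1, hμ])
    have e2 : π {p | p.2 ∈ Ωᶜ} = 0 := by
      have : π (Prod.snd ⁻¹' Ωᶜ) = (π.map Prod.snd) Ωᶜ :=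
        (Measure.map_apply measurable_snd msΩc).symm
      simpa [Set.preimage] using this.trans (by rw [h2, hμ'])
    have a1 : ∀ᵐ p ∂π, p.1 ∈ Ω := by
      rw [MeasureTheory.ae_iff]; simpa using e1
    have a2 : ∀ᵐ p ∂π, p.2 ∈ Ω := by
      rw [MeasureTheory.ae_iff]; simpa using e2
    exact a1.and a2
  -- bounds on the compact set Ω
  obtain ⟨R, hR⟩ := hΩc.isBounded.exists_norm_le
  obtain ⟨M, hM⟩ := hΩc.exists_bound_of_continuousOn hgc.continuousOn
  -- integrability facts
  have mg2 : AEStronglyMeasurable (fun p : EuclideanSpace ℝ (Fin n) × _ => g p.2) π :=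
    (hgc.comp continuous_snd).aestronglyMeasurable
  have mg1 : AEStronglyMeasurable (fun p : EuclideanSpace ℝ (Fin n) × _ => g p.1) π :=
    (hgc.comp continuous_fst).aestronglyMeasurable
  have i2 : Integrable (fun p : EuclideanSpace ℝ (Fin n) × _ => g p.2) π := by
    refine Integrable.mono' (integrable_const M) mg2 ?_
    filter_upwards [hae] with p hp using hM p.2 hp.2
  have i1 : Integrable (fun p : EuclideanSpace ℝ (Fin n) × _ => g p.1) π := by
    refine Integrable.mono' (integrable_const M) mg1 ?_
    filter_upwards [hae] with p hp using hM p.1 hp.1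
  have mnorm : AEStronglyMeasurable
      (fun p : EuclideanSpace ℝ (Fin n) × EuclideanSpace ℝ (Fin n) => ‖p.1 - p.2‖) π :=
    ((continuous_fst.sub continuous_snd).norm).aestronglyMeasurable
  have bnorm : ∀ᵐ p ∂π, ‖‖p.1 - p.2‖‖ ≤ 2 * R := by
    filter_upwards [hae] with p hp
    rw [norm_norm]
    calc ‖p.1 - p.2‖ ≤ ‖p.1‖ + ‖p.2‖ := norm_sub_le _ _
      _ ≤ R + R := add_le_add (hR p.1 hp.1) (hR p.2 hp.2)
      _ = 2 * R := by ring
  have inorm : Integrable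
      (fun p : EuclideanSpace ℝ (Fin n) × EuclideanSpace ℝ (Fin n) => ‖p.1 - p.2‖) π :=
    Integrable.mono' (integrable_const (2 * R)) mnorm bnorm
  -- rewrite the difference as one integral over the coupling
  have e2 : ∫ y, g y ∂μ' = ∫ p, g p.2 ∂π := by
    rw [← h2, integral_map measurable_snd.aemeasurable]
    exact hgc.aestronglyMeasurable
  have e1 : ∫ y, g y ∂μ = ∫ p, g p.1 ∂π := by
    rw [← h1, integral_map measurable_fst.aemeasurable]
    exact hgc.aestronglyMeasurable
  have ediff : (∫ y, g y ∂μ') - ∫ y, g y ∂μ = ∫ p, (g p.2 - g p.1) ∂π := by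
    rw [e1, e2, integral_sub i2 i1]
  rw [ediff]
  -- pointwise bound via the mean value inequality
  have hpt : ∀ᵐ p ∂π, ‖g p.2 - g p.1‖ ≤ CΩ * ‖p.1 - p.2‖ := by
    filter_upwards [hae] with p hp
    have := hΩconv.norm_image_sub_le_of_norm_fderiv_le
      (fun x _ => hg x) hbd hp.1 hp.2
    simpa [norm_sub_rev p.1 p.2] using this
  have step1 : |∫ p, (g p.2 - g p.1) ∂π| ≤ ∫ p, CΩ * ‖p.1 - p.2‖ ∂π := by
    rw [← Real.norm_eq_abs]
    exact norm_integral_le_of_norm_le (inorm.const_mul CΩ) hpt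
  have step2 : ∫ p, CΩ * ‖p.1 - p.2‖ ∂π ≤ CΩ * Real.sqrt (∫ p, ‖p.1 - p.2‖ ^ 2 ∂π) := by
    rw [integral_const_mul]
    refine mul_le_mul_of_nonneg_left ?_ hCΩ
    exact integral_le_sqrt_integral_sq mnorm (fun p => norm_nonneg _) bnorm
  exact step1.trans step2

/-- A `C¹` functional on measures whose intrinsic derivative `D_μ F = D_y (δF/δμ)` is
bounded by `CΩ` on `P(Ω) × Ω` is `CΩ`-Lipschitz on `P(Ω)` w.r.t. `W₂`. -/
theorem stmt3 {n : ℕ} (Ω : Set (EuclideanSpace ℝ (Fin n)))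
    (hΩc : IsCompact Ω) (hΩconv : Convex ℝ Ω)
    (F : Measure (EuclideanSpace ℝ (Fin n)) → ℝ)
    (δF : Measure (EuclideanSpace ℝ (Fin n)) → EuclideanSpace ℝ (Fin n) → ℝ)
    (CΩ : ℝ)
    -- δF is the flat derivative of F on P(Ω):
    (hflat : ∀ μ μ' : Measure (EuclideanSpace ℝ (Fin n)),
      IsProbabilityMeasure μ → IsProbabilityMeasure μ' → μ Ωᶜ = 0 → μ' Ωᶜ = 0 →
      F μ' - F μ = ∫ t in (0:ℝ)..1,
        ((∫ y, δF (ENNReal.ofReal (1 - t) • μ + ENNReal.ofReal t • μ') y ∂μ') -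
         ∫ y, δF (ENNReal.ofReal (1 - t) • μ + ENNReal.ofReal t • μ') y ∂μ))
    -- normalization of the flat derivative:
    (hnorm : ∀ μ : Measure (EuclideanSpace ℝ (Fin n)),
      IsProbabilityMeasure μ → μ Ωᶜ = 0 → ∫ y, δF μ y ∂μ = 0)
    -- δF(μ,·) is C¹ in y with derivative (the intrinsic derivative) bounded by CΩ on Ω:
    (hC1 : ∀ μ : Measure (EuclideanSpace ℝ (Fin n)),
      IsProbabilityMeasure μ → μ Ωᶜ = 0 →
      Differentiable ℝ (δF μ) ∧ ∀ y ∈ Ω, ‖fderiv ℝ (δF μ) y‖ ≤ CΩ) :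
    ∀ μ μ' : Measure (EuclideanSpace ℝ (Fin n)),
      IsProbabilityMeasure μ → IsProbabilityMeasure μ' → μ Ωᶜ = 0 → μ' Ωᶜ = 0 →
      |F μ' - F μ| ≤ CΩ * W2 μ μ' := by
  intro μ μ' hPμ hPμ' hμΩ hμ'Ω
  haveI := hPμ; haveI := hPμ'
  -- Ω is nonempty
  have hΩne : Ω.Nonempty := by
    by_contra h
    rw [Set.not_nonempty_iff_eq_empty] at h
    subst h
    simp [Set.compl_empty] at hμΩ
  obtain ⟨y₀, hy₀⟩ := hΩne
  have hCΩ : 0 ≤ CΩ :=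
    le_trans (norm_nonneg _) ((hC1 μ hPμ hμΩ).2 y₀ hy₀)
  set S : Set ℝ := { c : ℝ | ∃ π : Measure (EuclideanSpace ℝ (Fin n) × EuclideanSpace ℝ (Fin n)),
    IsProbabilityMeasure π ∧ π.map Prod.fst = μ ∧ π.map Prod.snd = μ' ∧
    c = ∫ p, ‖p.1 - p.2‖ ^ 2 ∂π } with hS
  have hW : W2 μ μ' = Real.sqrt (sInf S) := rfl
  -- every element of S gives the desired bound
  have hd : ∀ c ∈ S, |F μ' - F μ| ≤ CΩ * Real.sqrt c := by
    rintro c ⟨π, hπ, hm1, hm2, rfl⟩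
    rw [hflat μ μ' hPμ hPμ' hμΩ hμ'Ω]
    have hb : ∀ t ∈ Set.uIoc (0:ℝ) 1,
        ‖(∫ y, δF (ENNReal.ofReal (1 - t) • μ + ENNReal.ofReal t • μ') y ∂μ') -
         ∫ y, δF (ENNReal.ofReal (1 - t) • μ + ENNReal.ofReal t • μ') y ∂μ‖ ≤
        CΩ * Real.sqrt (∫ p, ‖p.1 - p.2‖ ^ 2 ∂π) := by
      intro t ht
      rw [Set.uIoc_of_le zero_le_one] at ht
      set ν := ENNReal.ofReal (1 - t) • μ + ENNReal.ofReal t • μ' with hν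
      have hνP : IsProbabilityMeasure ν := by
        constructor
        rw [hν]
        simp only [Measure.coe_add, Measure.coe_smul, Pi.add_apply, Pi.smul_apply,
          smul_eq_mul, measure_univ, mul_one]
        rw [← ENNReal.ofReal_add (by linarith [ht.2]) (le_of_lt ht.1)]
        norm_num
      have hνΩ : ν Ωᶜ = 0 := by
        rw [hν]
        simp [Measure.coe_add, Measure.coe_smul, hμΩ, hμ'Ω]
      obtain ⟨hdiff, hfd⟩ := hC1 ν hνP hνΩ
      have := key_estimate hΩc hΩconv (δF ν) hCΩ hdiff hfd π hπ hm1 hm2 hμΩ hμ'Ω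
      simpa [Real.norm_eq_abs] using this
    have := intervalIntegral.norm_integral_le_of_norm_le_const hb
    simpa [Real.norm_eq_abs] using this
  -- S is nonempty and bounded below by 0
  have Sne : S.Nonempty := by
    refine ⟨∫ p, ‖p.1 - p.2‖ ^ 2 ∂(μ.prod μ'), μ.prod μ', inferInstance, ?_, ?_, rfl⟩
    · rw [Measure.map_fst_prod, measure_univ, one_smul]
    · rw [Measure.map_snd_prod, measure_univ, one_smul]
  have hS0 : ∀ c ∈ S, (0:ℝ) ≤ c := by
    rintro c ⟨π, hπ, _, _, rfl⟩
    exact integral_nonneg fun p => by positivity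
  rw [hW]
  by_cases hc0 : CΩ = 0
  · obtain ⟨c₀, hc₀⟩ := Sne
    have h := hd c₀ hc₀
    rw [hc0, zero_mul] at h
    rw [hc0, zero_mul]
    exact h
  · have hCpos : 0 < CΩ := lt_of_le_of_ne hCΩ (Ne.symm hc0)
    have hle : (|F μ' - F μ| / CΩ) ^ 2 ≤ sInf S := by
      refine le_csInf Sne fun c hc => ?_
      have h1 : |F μ' - F μ| / CΩ ≤ Real.sqrt c := by
        rw [div_le_iff₀ hCpos]
        have := hd c hc
        linarith [this]
      calc (|F μ' - F μ| / CΩ) ^ 2 ≤ (Real.sqrt c) ^ 2 :=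
            pow_le_pow_left₀ (by positivity) h1 2
        _ = c := Real.sq_sqrt (hS0 c hc)
    have h2 : |F μ' - F μ| / CΩ ≤ Real.sqrt (sInf S) := by
      rw [show |F μ' - F μ| / CΩ = Real.sqrt ((|F μ' - F μ| / CΩ) ^ 2) from
        (Real.sqrt_sq (by positivity)).symm]
      exact Real.sqrt_le_sqrt hle
    calc |F μ' - F μ| = CΩ * (|F μ' - F μ| / CΩ) := by field_simp
      _ ≤ CΩ * Real.sqrt (sInf S) := mul_le_mul_of_nonneg_left h2 hCΩ
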